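/- Let r > 0 and reals 0 < Φ < Φ′ and c′ ∈ (0,∞). Let V : ℝ → ℝ be nonnegative, vanish on (−∞,0), be locally integrable, with x ↦ e^{−Φ′x}·V(x) nondecreasing on (0,∞) and converging to c′ as x → ∞. Then lim_{b→∞} [e^{Φb} + r·∫₀ᵇ e^{Φz}·V(b−z) dz − r·∫₀ᵇ V(z) dz] / V(b) = r·Φ/((Φ′−Φ)·Φ′). -/

import Mathlib

open MeasureTheory Filter Set

lemma expInt (a : ℝ) (ha : a ≠ 0) (b : ℝ) :
    ∫ z in (0:ℝ)..b, Real.exp (-(a*z)) = (1 - Real.exp (-(a*b)))/a := by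
  have h : ∀ z : ℝ, Real.exp (-(a*z)) = (fun x => Real.exp x) ((-a) * z) := by
    intro z; ring_nf
  rw [intervalIntegral.integral_congr (g := fun z => (fun x => Real.exp x) ((-a)*z))
    (fun z _ => h z)]
  rw [intervalIntegral.integral_comp_mul_left _ (neg_ne_zero.mpr ha)]
  rw [integral_exp]
  rw [smul_eq_mul]
  field_simp
  ring_nf
  rw [Real.exp_zero]
  ring


/-- convergence of `I_{-∞}^{(q,r)}(b)/W^{(q+r)}(b)` as `b → ∞`
(proof of Corollary 3.2(iii)). -/
theorem stmt_16 (r Φ Φ' c' : ℝ) (hr : 0 < r) (hΦ : 0 < Φ) (hΦΦ' : Φ < Φ') (hc' : 0 < c')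
    (V : ℝ → ℝ) (hVnn : ∀ x, 0 ≤ V x) (hV0 : ∀ x < 0, V x = 0)
    (hVli : LocallyIntegrable V volume)
    (hVmono : MonotoneOn (fun x => Real.exp (-Φ' * x) * V x) (Set.Ioi 0))
    (hVlim : Tendsto (fun x => Real.exp (-Φ' * x) * V x) atTop (nhds c')) :
    Tendsto (fun b => (Real.exp (Φ * b)
        + r * (∫ z in (0:ℝ)..b, Real.exp (Φ * z) * V (b - z))
        - r * ∫ z in (0:ℝ)..b, V z) / V b)
      atTop (nhds (r * Φ / ((Φ' - Φ) * Φ'))) := by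
  have hβ : 0 < Φ' := hΦ.trans hΦΦ'
  have hα : 0 < Φ' - Φ := sub_pos.mpr hΦΦ'
  set g : ℝ → ℝ := fun x => Real.exp (-Φ' * x) * V x with hgdef
  set h : ℝ → ℝ := fun z => Real.exp (-((Φ'-Φ)*z)) - Real.exp (-(Φ'*z)) with hhdef
  set K : ℝ := 1/(Φ'-Φ) - 1/Φ' with hKdef
  have hKpos : 0 < K := by
    rw [hKdef]
    have : 1/Φ' < 1/(Φ'-Φ) := by
      apply one_div_lt_one_div_of_lt hα; linarith
    linarith
  have hgnn : ∀ x, 0 ≤ g x := fun x => mul_nonneg (Real.exp_pos _).le (hVnn x)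
  have hhnn : ∀ z, 0 ≤ z → 0 ≤ h z := by
    intro z hz
    simp only [hhdef, sub_nonneg]
    apply Real.exp_le_exp.mpr
    nlinarith
  have hgle : ∀ x, 0 < x → g x ≤ c' := by
    intro x hx
    refine ge_of_tendsto hVlim ?_
    filter_upwards [eventually_ge_atTop x] with y hy
    exact hVmono (mem_Ioi.mpr hx) (mem_Ioi.mpr (hx.trans_le hy)) hy
  -- interval integrability of V and friends
  have hVint : ∀ a b : ℝ, IntervalIntegrable V volume a b := by
    intro a b
    rw [intervalIntegrable_iff]
    exact (hVli.integrableOn_isCompact isCompact_uIcc).mono_set Set.uIoc_subset_uIcc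
  have hVbint : ∀ b : ℝ, IntervalIntegrable (fun z => V (b - z)) volume 0 b := by
    intro b
    simpa using ((hVint 0 b).comp_sub_left b).symm
  have hgbint : ∀ b : ℝ, IntervalIntegrable (fun z => g (b - z)) volume 0 b := by
    intro b
    exact (hVbint b).continuousOn_mul (g := fun z => Real.exp (-Φ' * (b - z)))
      (Continuous.continuousOn (by continuity))
  have cexp : ∀ c : ℝ, Continuous (fun z : ℝ => Real.exp (-(c*z))) := fun c =>
    Real.continuous_exp.comp ((continuous_const.mul continuous_id).neg)
  have hcont : Continuous h := (cexp (Φ'-Φ)).sub (cexp Φ')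
  have hint1 : ∀ b : ℝ, IntervalIntegrable (fun z => h z * g (b - z)) volume 0 b := by
    intro b
    exact (hgbint b).continuousOn_mul (g := h) hcont.continuousOn
  have hintA : ∀ b : ℝ,
      IntervalIntegrable (fun z => Real.exp (-((Φ'-Φ)*z)) * g (b - z)) volume 0 b := by
    intro b
    exact (hgbint b).continuousOn_mul (cexp (Φ'-Φ)).continuousOn
  have hintB : ∀ b : ℝ,
      IntervalIntegrable (fun z => Real.exp (-(Φ'*z)) * g (b - z)) volume 0 b := by
    intro b
    exact (hgbint b).continuousOn_mul (cexp Φ').continuousOn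
  have hhint : ∀ a b : ℝ, IntervalIntegrable h volume a b := by
    intro a b
    exact hcont.intervalIntegrable a b
  -- the explicit formula for ∫ h
  have hJ : ∀ b : ℝ, (∫ z in (0:ℝ)..b, h z)
      = (1 - Real.exp (-((Φ'-Φ)*b)))/(Φ'-Φ) - (1 - Real.exp (-(Φ'*b)))/Φ' := by
    intro b
    rw [hhdef]
    rw [intervalIntegral.integral_sub
      ((cexp (Φ'-Φ)).intervalIntegrable 0 b) ((cexp Φ').intervalIntegrable 0 b)]
    rw [expInt _ hα.ne' b, expInt _ hβ.ne' b]
  have hJnn : ∀ b : ℝ, 0 ≤ b → 0 ≤ ∫ z in (0:ℝ)..b, h z := by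
    intro b hb
    apply intervalIntegral.integral_nonneg hb
    intro u hu; exact hhnn u hu.1
  have hJleK : ∀ b : ℝ, 0 ≤ b → (∫ z in (0:ℝ)..b, h z) ≤ K := by
    intro b hb
    rw [hJ b, hKdef]
    have e1 : 0 < Real.exp (-((Φ'-Φ)*b)) := Real.exp_pos _
    have e2 : 0 < Real.exp (-(Φ'*b)) := Real.exp_pos _
    have e3 : Real.exp (-(Φ'*b)) ≤ Real.exp (-((Φ'-Φ)*b)) := by
      apply Real.exp_le_exp.mpr; nlinarith [mul_nonneg hΦ.le hb]
    have key : Real.exp (-(Φ'*b))/Φ' ≤ Real.exp (-((Φ'-Φ)*b))/(Φ'-Φ) :=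
      div_le_div₀ e1.le e3 hα (by linarith)
    have ex1 : (1 - Real.exp (-((Φ'-Φ)*b)))/(Φ'-Φ)
        = 1/(Φ'-Φ) - Real.exp (-((Φ'-Φ)*b))/(Φ'-Φ) := by ring
    have ex2 : (1 - Real.exp (-(Φ'*b)))/Φ' = 1/Φ' - Real.exp (-(Φ'*b))/Φ' := by ring
    rw [ex1, ex2]
    linarith [key]
  have hexp : ∀ c : ℝ, 0 < c → Tendsto (fun b => Real.exp (-(c*b))) atTop (nhds 0) := by
    intro c hc
    have h1 : Tendsto (fun b : ℝ => c*b) atTop atTop := tendsto_id.const_mul_atTop hc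
    exact Real.tendsto_exp_atBot.comp (tendsto_neg_atTop_atBot.comp h1)
  have hJlim : Tendsto (fun b => ∫ z in (0:ℝ)..b, h z) atTop (nhds K) := by
    have l : Tendsto (fun b => (1 - Real.exp (-((Φ'-Φ)*b)))/(Φ'-Φ)
        - (1 - Real.exp (-(Φ'*b)))/Φ') atTop (nhds (((1:ℝ)-0)/(Φ'-Φ) - ((1:ℝ)-0)/Φ')) :=
      ((tendsto_const_nhds.sub (hexp _ hα)).div_const _).sub
        ((tendsto_const_nhds.sub (hexp _ hβ)).div_const _)
    have e : ((1:ℝ)-0)/(Φ'-Φ) - ((1:ℝ)-0)/Φ' = K := by rw [hKdef]; ring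
    rw [e] at l
    exact l.congr (fun b => (hJ b).symm)
  -- upper bound
  have hub : ∀ b : ℝ, 0 ≤ b →
      (∫ z in (0:ℝ)..b, h z * g (b - z)) ≤ c' * ∫ z in (0:ℝ)..b, h z := by
    intro b hb
    have hne : ∀ᵐ z : ℝ ∂volume, z ≠ b := by
      rw [ae_iff]
      have : {z : ℝ | ¬ z ≠ b} = {b} := by ext; simp
      rw [this]; exact measure_singleton b
    have hae : (fun z => h z * g (b - z)) ≤ᵐ[volume.restrict (Icc 0 b)]
        (fun z => c' * h z) := by
      filter_upwards [ae_restrict_of_ae hne, ae_restrict_mem measurableSet_Icc]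
        with z hzb hz
      have hz0 : 0 ≤ z := hz.1
      have hzb' : z < b := lt_of_le_of_ne hz.2 hzb
      have hgc : g (b - z) ≤ c' := hgle _ (by linarith)
      calc h z * g (b-z) ≤ h z * c' := mul_le_mul_of_nonneg_left hgc (hhnn z hz0)
      _ = c' * h z := mul_comm _ _
    have := intervalIntegral.integral_mono_ae_restrict hb (hint1 b)
      ((hhint 0 b).const_mul c') hae
    rwa [intervalIntegral.integral_const_mul] at this
  -- main convergence of the convolution integral
  have hI : Tendsto (fun b => ∫ z in (0:ℝ)..b, h z * g (b - z)) atTop (nhds (c'*K)) := by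
    rw [Metric.tendsto_atTop]
    intro ε hε
    set δ : ℝ := ε/(2*(K+1)) with hδdef
    have hδ : 0 < δ := by rw [hδdef]; positivity
    set δ' : ℝ := ε/(2*(c'+1)) with hδ'def
    have hδ' : 0 < δ' := by rw [hδ'def]; positivity
    obtain ⟨M, hM⟩ := (Metric.tendsto_atTop.mp hVlim) δ hδ
    obtain ⟨T0, hT0⟩ := (Metric.tendsto_atTop.mp hJlim) δ' hδ'
    set T := max T0 0 with hTdef
    have hT0' : (0:ℝ) ≤ T := le_max_right _ _
    have hJT : K - δ' ≤ ∫ z in (0:ℝ)..T, h z := by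
      have h1 := hT0 T (le_max_left _ _)
      rw [Real.dist_eq] at h1
      have h2 := abs_lt.mp h1
      linarith [h2.1]
    refine ⟨T + max M 0 + 1, fun b hb => ?_⟩
    have hbT : T ≤ b := by
      have := le_max_right M 0; linarith
    have hb0 : (0:ℝ) ≤ b := le_trans hT0' hbT
    have hsub : Set.uIcc (0:ℝ) T ⊆ Set.uIcc (0:ℝ) b := by
      rw [Set.uIcc_of_le hT0', Set.uIcc_of_le hb0]
      exact Icc_subset_Icc le_rfl hbT
    have hsub2 : Set.uIcc T b ⊆ Set.uIcc (0:ℝ) b := by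
      rw [Set.uIcc_of_le hbT, Set.uIcc_of_le hb0]
      exact Icc_subset_Icc hT0' le_rfl
    have hglb : ∀ z ∈ Icc (0:ℝ) T, c' - δ ≤ g (b - z) := by
      intro z hz
      have hbz : M ≤ b - z := by
        have h3 := le_max_left M 0
        have h4 := hz.2
        linarith
      have h5 := hM (b - z) hbz
      rw [Real.dist_eq] at h5
      have h6 := abs_lt.mp h5
      linarith [h6.1]
    have low1 : (∫ z in (0:ℝ)..T, (c' - δ) * h z) ≤ ∫ z in (0:ℝ)..T, h z * g (b - z) := by
      apply intervalIntegral.integral_mono_on hT0' ((hhint 0 T).const_mul _)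
        ((hint1 b).mono_set hsub)
      intro z hz
      calc (c'-δ)*h z ≤ g (b-z) * h z :=
            mul_le_mul_of_nonneg_right (hglb z hz) (hhnn z hz.1)
      _ = h z * g (b-z) := mul_comm _ _
    have hsplit : (∫ z in (0:ℝ)..T, h z * g (b-z)) + (∫ z in T..b, h z * g (b-z))
        = ∫ z in (0:ℝ)..b, h z * g (b-z) :=
      intervalIntegral.integral_add_adjacent_intervals
        ((hint1 b).mono_set hsub) ((hint1 b).mono_set hsub2)
    have htail : 0 ≤ ∫ z in T..b, h z * g (b-z) := by
      apply intervalIntegral.integral_nonneg hbT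
      intro u hu
      exact mul_nonneg (hhnn u (le_trans hT0' hu.1)) (hgnn _)
    have hlb : (c' - δ) * (∫ z in (0:ℝ)..T, h z) ≤ ∫ z in (0:ℝ)..b, h z * g (b-z) := by
      rw [← intervalIntegral.integral_const_mul]
      linarith [low1, htail, hsplit]
    have hJTle : (∫ z in (0:ℝ)..T, h z) ≤ K := hJleK T hT0'
    have hJTnn : 0 ≤ ∫ z in (0:ℝ)..T, h z := hJnn T hT0'
    have hub1 : (∫ z in (0:ℝ)..b, h z * g (b-z)) ≤ c' * K := by
      have := hub b hb0
      have h7 : c' * (∫ z in (0:ℝ)..b, h z) ≤ c' * K :=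
        mul_le_mul_of_nonneg_left (hJleK b hb0) hc'.le
      linarith
    have hu1 : δ' * (2*(c'+1)) = ε := by rw [hδ'def]; field_simp
    have hu2 : δ * (2*(K+1)) = ε := by rw [hδdef]; field_simp
    have s1 : c' * (K - (∫ z in (0:ℝ)..T, h z)) ≤ c' * δ' :=
      mul_le_mul_of_nonneg_left (by linarith) hc'.le
    have s2 : δ * (∫ z in (0:ℝ)..T, h z) ≤ δ * K :=
      mul_le_mul_of_nonneg_left hJTle hδ.le
    have s3 : c'*K - (c'-δ)*(∫ z in (0:ℝ)..T, h z)
        = c'*(K - (∫ z in (0:ℝ)..T, h z)) + δ*(∫ z in (0:ℝ)..T, h z) := by ring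
    have s4 : c'*δ' = ε/2 - δ' := by linear_combination hu1/2
    have s5 : δ*K = ε/2 - δ := by linear_combination hu2/2
    rw [Real.dist_eq]
    rw [abs_lt]
    constructor
    · linarith [hlb]
    · linarith [hub1]
  -- algebraic identity rewriting the original quotient
  have hid : ∀ b : ℝ, (Real.exp (Φ * b)
        + r * (∫ z in (0:ℝ)..b, Real.exp (Φ * z) * V (b - z))
        - r * ∫ z in (0:ℝ)..b, V z) / V b
      = (Real.exp ((Φ-Φ')*b) + r * (∫ z in (0:ℝ)..b, h z * g (b - z))) / g b := by
    intro b
    have key1 : ∀ z : ℝ, Real.exp (Φ'*b) * (Real.exp (-((Φ'-Φ)*z)) * g (b-z))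
        = Real.exp (Φ*z) * V (b-z) := by
      intro z
      simp only [hgdef]
      rw [show Real.exp (Φ'*b) * (Real.exp (-((Φ'-Φ)*z)) * (Real.exp (-Φ'*(b-z)) * V (b-z)))
          = (Real.exp (Φ'*b) * Real.exp (-((Φ'-Φ)*z)) * Real.exp (-Φ'*(b-z))) * V (b-z)
          from by ring, ← Real.exp_add, ← Real.exp_add]
      congr 2
      ring
    have key2 : ∀ z : ℝ, Real.exp (Φ'*b) * (Real.exp (-(Φ'*z)) * g (b-z)) = V (b-z) := by
      intro z
      simp only [hgdef]
      rw [show Real.exp (Φ'*b) * (Real.exp (-(Φ'*z)) * (Real.exp (-Φ'*(b-z)) * V (b-z)))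
          = (Real.exp (Φ'*b) * Real.exp (-(Φ'*z)) * Real.exp (-Φ'*(b-z))) * V (b-z)
          from by ring, ← Real.exp_add, ← Real.exp_add]
      rw [show Φ'*b + -(Φ'*z) + -Φ'*(b-z) = 0 from by ring, Real.exp_zero, one_mul]
    have e1 : (∫ z in (0:ℝ)..b, Real.exp (Φ*z) * V (b-z))
        = Real.exp (Φ'*b) * ∫ z in (0:ℝ)..b, Real.exp (-((Φ'-Φ)*z)) * g (b-z) := by
      rw [← intervalIntegral.integral_const_mul]
      exact intervalIntegral.integral_congr (fun z _ => (key1 z).symm)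
    have e2 : (∫ z in (0:ℝ)..b, V z)
        = Real.exp (Φ'*b) * ∫ z in (0:ℝ)..b, Real.exp (-(Φ'*z)) * g (b-z) := by
      have hcv : (∫ z in (0:ℝ)..b, V (b - z)) = ∫ z in (0:ℝ)..b, V z := by
        have := intervalIntegral.integral_comp_sub_left (a := 0) (b := b) V b
        simpa using this
      rw [← hcv, ← intervalIntegral.integral_const_mul]
      exact intervalIntegral.integral_congr (fun z _ => (key2 z).symm)
    have e3 : (∫ z in (0:ℝ)..b, h z * g (b-z))
        = (∫ z in (0:ℝ)..b, Real.exp (-((Φ'-Φ)*z)) * g (b-z))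
          - ∫ z in (0:ℝ)..b, Real.exp (-(Φ'*z)) * g (b-z) := by
      rw [← intervalIntegral.integral_sub (hintA b) (hintB b)]
      apply intervalIntegral.integral_congr
      intro z _
      simp only [hhdef]
      ring
    have eV : V b = Real.exp (Φ'*b) * g b := by
      simp only [hgdef]
      rw [← mul_assoc, ← Real.exp_add, show Φ'*b + -Φ'*b = 0 from by ring,
        Real.exp_zero, one_mul]
    have eE : Real.exp (Φ*b) = Real.exp (Φ'*b) * Real.exp ((Φ-Φ')*b) := by
      rw [← Real.exp_add]; congr 1; ring
    rw [e1, e2, e3, eV, eE]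
    rw [show Real.exp (Φ'*b) * Real.exp ((Φ-Φ')*b)
        + r * (Real.exp (Φ'*b) * ∫ z in (0:ℝ)..b, Real.exp (-((Φ'-Φ)*z)) * g (b-z))
        - r * (Real.exp (Φ'*b) * ∫ z in (0:ℝ)..b, Real.exp (-(Φ'*z)) * g (b-z))
        = Real.exp (Φ'*b) * (Real.exp ((Φ-Φ')*b)
          + r * ((∫ z in (0:ℝ)..b, Real.exp (-((Φ'-Φ)*z)) * g (b-z))
            - ∫ z in (0:ℝ)..b, Real.exp (-(Φ'*z)) * g (b-z))) from by ring]
    exact mul_div_mul_left _ _ (Real.exp_ne_zero _)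
  -- final assembly
  have hexp' : Tendsto (fun b => Real.exp ((Φ-Φ')*b)) atTop (nhds 0) :=
    (hexp _ hα).congr (fun b => by congr 1; ring)
  have hmain : Tendsto (fun b =>
      (Real.exp ((Φ-Φ')*b) + r * (∫ z in (0:ℝ)..b, h z * g (b - z))) / g b)
      atTop (nhds ((0 + r*(c'*K))/c')) :=
    Tendsto.div (hexp'.add (hI.const_mul r)) hVlim hc'.ne'
  have hval : (0 + r*(c'*K))/c' = r * Φ / ((Φ' - Φ) * Φ') := by
    rw [hKdef]
    field_simp
    ring
  rw [hval] at hmain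
  exact Tendsto.congr (fun b => (hid b).symm) hmain
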